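/- The generalized hypergeometric series ₃F₂(1, 1, 3/2; 5/3, 13/6; 1) equals 28/3 + 7·2^{1/3}·π/(9√3) − 14·2^{1/3}·arctan((1 + 2^{2/3})/√3)/(3√3) + (14/9)·2^{1/3}·ln(2 − 2^{2/3}) − (7/9)·2^{1/3}·ln(2·(2 + 2^{1/3} + 2^{2/3})). -/

import Mathlib

set_option maxHeartbeats 1000000

open Real

noncomputable def poch (a : ℝ) (n : ℕ) : ℝ := Polynomial.eval a (ascPochhammer ℝ n)


lemma poch_zero (a : ℝ) : poch a 0 = 1 := by simp [poch]

lemma poch_succ (a : ℝ) (n : ℕ) : poch a (n+1) = poch a n * (a + n) := by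
  simp [poch, ascPochhammer_succ_right]

lemma poch_pos {a : ℝ} (ha : 0 < a) (n : ℕ) : 0 < poch a n := by
  induction n with
  | zero => simp [poch_zero]
  | succ n ih => rw [poch_succ]; positivity

noncomputable def L (m : ℕ) : ℝ := ∫ v in (0:ℝ)..1, v^6 * (1-v^3)^m

lemma L_zero : L 0 = 1/7 := by
  simp only [L, pow_zero, mul_one]
  rw [integral_pow]
  norm_num

lemma L_succ (m : ℕ) : (3*(m+1)+7 : ℝ) * L (m+1) = 3*(m+1) * L m := by
  have key : ∫ v in (0:ℝ)..1,
      (7 * (v^6 * (1-v^3)^(m+1)) + (3*(m+1):ℝ) * (v^6 * (1-v^3)^(m+1))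
        - (3*(m+1):ℝ) * (v^6 * (1-v^3)^m)) = 0 := by
    have : ∀ v ∈ Set.uIcc (0:ℝ) 1, HasDerivAt (fun v : ℝ => v^7 * (1-v^3)^(m+1))
        (7 * (v^6 * (1-v^3)^(m+1)) + (3*(m+1):ℝ) * (v^6 * (1-v^3)^(m+1))
          - (3*(m+1):ℝ) * (v^6 * (1-v^3)^m)) v := by
      intro v _
      have h1 : HasDerivAt (fun v : ℝ => v^7) (7 * v^6) v := by
        simpa using hasDerivAt_pow 7 v
      have h2 : HasDerivAt (fun v : ℝ => (1-v^3)^(m+1))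
          ((m+1 : ℕ) * (1-v^3)^m * (-(3*v^2))) v := by
        have h3 : HasDerivAt (fun v : ℝ => 1-v^3) (-(3*v^2)) v := by
          simpa using ((hasDerivAt_pow 3 v).const_sub 1)
        exact (HasDerivAt.pow h3 (m+1)).congr_deriv (by push_cast; ring)
      have := h1.mul h2
      refine this.congr_deriv ?_
      push_cast
      ring
    have hcont : IntervalIntegrable (fun v : ℝ =>
        7 * (v^6 * (1-v^3)^(m+1)) + (3*(m+1):ℝ) * (v^6 * (1-v^3)^(m+1))
          - (3*(m+1):ℝ) * (v^6 * (1-v^3)^m)) MeasureTheory.volume 0 1 := by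
      apply Continuous.intervalIntegrable; continuity
    rw [intervalIntegral.integral_eq_sub_of_hasDerivAt this hcont]
    norm_num
  have i1 : IntervalIntegrable (fun v : ℝ => v^6 * (1-v^3)^(m+1)) MeasureTheory.volume 0 1 := by
    apply Continuous.intervalIntegrable; continuity
  have i2 : IntervalIntegrable (fun v : ℝ => v^6 * (1-v^3)^m) MeasureTheory.volume 0 1 := by
    apply Continuous.intervalIntegrable; continuity
  rw [intervalIntegral.integral_sub ((i1.const_mul 7).add (i1.const_mul _)) (i2.const_mul _),
    intervalIntegral.integral_add (i1.const_mul 7) (i1.const_mul _),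
    intervalIntegral.integral_const_mul, intervalIntegral.integral_const_mul,
    intervalIntegral.integral_const_mul] at key
  change 7 * L (m+1) + (3*(m+1):ℝ) * L (m+1) - (3*(m+1):ℝ) * L m = 0 at key
  linarith


lemma term_eq (n : ℕ) :
    poch 1 n * poch 1 n * poch (3/2) n / (poch (5/3) n * poch (13/6) n * (Nat.factorial n : ℝ))
      = 7*(2*n+1) * L (2*n) := by
  induction n with
  | zero => simp [poch_zero, L_zero]
  | succ n ih =>
    have h1 := L_succ (2*n)
    have h2 := L_succ (2*n+1)
    push_cast at h1 h2
    have p1 := poch_pos (show (0:ℝ) < 1 by norm_num) n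
    have p32 := poch_pos (show (0:ℝ) < 3/2 by norm_num) n
    have p53 := poch_pos (show (0:ℝ) < 5/3 by norm_num) n
    have p136 := poch_pos (show (0:ℝ) < 13/6 by norm_num) n
    have pf : (0:ℝ) < (Nat.factorial n : ℝ) := by positivity
    have hden : poch (5/3) n * poch (13/6) n * (Nat.factorial n : ℝ) ≠ 0 := by positivity
    have ih' : poch 1 n * poch 1 n * poch (3/2) n
        = 7*(2*n+1) * L (2*n) * (poch (5/3) n * poch (13/6) n * (Nat.factorial n : ℝ)) := by
      rw [← ih]; field_simp
    have h2n : (2*(n+1)) = (2*n+1)+1 := by ring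
    rw [h2n, poch_succ, poch_succ, poch_succ, poch_succ, Nat.factorial_succ]
    push_cast
    have d1 : (6*(n:ℝ)+10) ≠ 0 := by positivity
    have d2 : (6*(n:ℝ)+13) ≠ 0 := by positivity
    have eL1 : L (2*n+1) = 3*(2*(n:ℝ)+1) * L (2*n) / (6*(n:ℝ)+10) := by
      rw [eq_div_iff d1]; linarith
    have eL2 : L (2*n+1+1)
        = 3*(2*(n:ℝ)+2) * (3*(2*(n:ℝ)+1) * L (2*n)) / ((6*(n:ℝ)+13)*(6*(n:ℝ)+10)) := by
      rw [eq_div_iff (by positivity : ((6*(n:ℝ)+13)*(6*(n:ℝ)+10)) ≠ 0)]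
      have : L (2*n+1+1) * (6*(n:ℝ)+13) = 3*(2*(n:ℝ)+2) * L (2*n+1) := by linarith
      calc L (2*n+1+1) * ((6*(n:ℝ)+13)*(6*(n:ℝ)+10))
          = (L (2*n+1+1) * (6*(n:ℝ)+13)) * (6*(n:ℝ)+10) := by ring
        _ = 3*(2*(n:ℝ)+2) * (L (2*n+1) * (6*(n:ℝ)+10)) := by rw [this]; ring
        _ = 3*(2*(n:ℝ)+2) * (3*(2*(n:ℝ)+1) * L (2*n)) := by
            rw [eL1]; field_simp
    rw [div_eq_iff (by positivity), eL2]
    calc poch 1 n * (1 + (n:ℝ)) * (poch 1 n * (1 + (n:ℝ))) * (poch (3/2) n * (3/2 + (n:ℝ)))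
        = (poch 1 n * poch 1 n * poch (3/2) n) * ((1 + (n:ℝ)) * (1 + (n:ℝ)) * (3/2 + (n:ℝ))) := by
          ring
      _ = 7*(2*(n:ℝ)+1) * L (2*n) * (poch (5/3) n * poch (13/6) n * (Nat.factorial n : ℝ))
            * ((1 + (n:ℝ)) * (1 + (n:ℝ)) * (3/2 + (n:ℝ))) := by rw [ih']
      _ = 7 * (2 * ((n:ℝ) + 1) + 1) *
            (3*(2*(n:ℝ)+2) * (3*(2*(n:ℝ)+1) * L (2*n)) / ((6*(n:ℝ)+13)*(6*(n:ℝ)+10))) *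
            (poch (5/3) n * (5/3 + (n:ℝ)) * (poch (13/6) n * (13/6 + (n:ℝ))) *
              (((n:ℝ) + 1) * (Nat.factorial n : ℝ))) := by
          field_simp
          ring

lemma eval_main :
    ∫ v in (0:ℝ)..1, 7*(1+(1-v^3)^2)/(2-v^3)^2
      = 28/3 + 7 * (2:ℝ) ^ ((1:ℝ)/3) * Real.pi / (9 * Real.sqrt 3)
        - 14 * (2:ℝ) ^ ((1:ℝ)/3)
            * Real.arctan ((1 + (2:ℝ) ^ ((2:ℝ)/3)) / Real.sqrt 3) / (3 * Real.sqrt 3)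
        + 14/9 * (2:ℝ) ^ ((1:ℝ)/3) * Real.log (2 - (2:ℝ) ^ ((2:ℝ)/3))
        - 7/9 * (2:ℝ) ^ ((1:ℝ)/3)
            * Real.log (2 * (2 + (2:ℝ) ^ ((1:ℝ)/3) + (2:ℝ) ^ ((2:ℝ)/3))) := by
  set c : ℝ := (2:ℝ)^((1:ℝ)/3) with hcdef
  set s : ℝ := Real.sqrt 3 with hsdef
  have hc3 : c^3 = 2 := by
    rw [hcdef, ← Real.rpow_natCast ((2:ℝ)^((1:ℝ)/3)) 3, ← Real.rpow_mul (by norm_num)]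
    norm_num
  have hc1 : 1 < c := by
    rw [hcdef, show (1:ℝ) = (2:ℝ)^(0:ℝ) by simp]
    exact Real.rpow_lt_rpow_left_iff (by norm_num) |>.mpr (by norm_num)
  have hc0 : (0:ℝ) < c := by linarith
  have hs0 : (0:ℝ) < s := by rw [hsdef]; positivity
  have hs2 : s^2 = 3 := by rw [hsdef]; exact Real.sq_sqrt (by norm_num)
  have hc2eq : (2:ℝ)^((2:ℝ)/3) = c^2 := by
    rw [hcdef, ← Real.rpow_natCast ((2:ℝ)^((1:ℝ)/3)) 2, ← Real.rpow_mul (by norm_num)]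
    norm_num
  -- the antiderivative
  set P : ℝ → ℝ := fun v => (c/6)*(-(Real.log (c-v)) + (1/2)*Real.log (v^2+c*v+c^2)
      + s*arctan ((2*v+c)/(c*s))) with hPdef
  set Φ : ℝ → ℝ := fun v => 7*v + (7/3)*(v/(2-v^3)) - (28/3)*(P v) with hΦdef
  have key : ∀ v ∈ Set.uIcc (0:ℝ) 1, HasDerivAt Φ (7*(1+(1-v^3)^2)/(2-v^3)^2) v := by
    intro v hv
    rw [Set.uIcc_of_le (by norm_num : (0:ℝ) ≤ 1)] at hv
    obtain ⟨hv0, hv1⟩ := hv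
    have hcv : (0:ℝ) < c - v := by linarith
    have hq : (0:ℝ) < v^2+c*v+c^2 := by positivity
    have h2v : (0:ℝ) < 2 - v^3 := by nlinarith
    -- arctan part
    have harc : HasDerivAt (fun v : ℝ => s * arctan ((2*v+c)/(c*s)))
        ((3*c/2)/(v^2+c*v+c^2)) v := by
      have hu : HasDerivAt (fun v : ℝ => (2*v+c)/(c*s)) (2/(c*s)) v := by
        have : HasDerivAt (fun v : ℝ => 2*v+c) 2 v := by
          simpa using ((hasDerivAt_id v).const_mul 2).add_const c
        simpa using this.div_const (c*s)
      have h1 := (hu.arctan).const_mul s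
      refine h1.congr_deriv ?_
      have hcs : c*s ≠ 0 := by positivity
      field_simp
      linear_combination (c^2+4*v^2+4*c*v) * hs2
    -- log parts
    have hlog1 : HasDerivAt (fun v : ℝ => Real.log (c-v)) ((-1)/(c-v)) v := by
      exact (((hasDerivAt_id v).const_sub c)).log (by simpa using hcv.ne')
    have hlog2 : HasDerivAt (fun v : ℝ => Real.log (v^2+c*v+c^2))
        ((2*v+c)/(v^2+c*v+c^2)) v := by
      have hpoly : HasDerivAt (fun v : ℝ => v^2+c*v+c^2) (2*v+c) v := by
        have h1 : HasDerivAt (fun v : ℝ => v^2) (2*v) v := by simpa using hasDerivAt_pow 2 v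
        simpa using (h1.add ((hasDerivAt_id v).const_mul c)).add_const (c^2)
      exact hpoly.log (by positivity)
    have hP : HasDerivAt P ((2-v^3)⁻¹) v := by
      have := ((hlog1.neg.add (hlog2.const_mul (1/2))).add harc).const_mul (c/6)
      refine this.congr_deriv ?_
      field_simp
      linear_combination (3*(2-v^3)*(v^2+c*v+c^2)*(c-v) - 3*v^6 + (3*v^3-6)*c^3) * hc3
    have hrat : HasDerivAt (fun v : ℝ => v/(2-v^3)) ((2+2*v^3)/(2-v^3)^2) v := by
      have hden : HasDerivAt (fun v : ℝ => 2-v^3) (-(3*v^2)) v := by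
        simpa using (hasDerivAt_pow 3 v).const_sub 2
      have := (hasDerivAt_id v).div hden (by linarith)
      refine this.congr_deriv ?_
      field_simp
      simp only [id]; ring
    have h7 : HasDerivAt (fun y : ℝ => 7*y) 7 v := by
      simpa using (hasDerivAt_id v).const_mul 7
    have total := (h7.add (hrat.const_mul (7/3))).sub (hP.const_mul (28/3))
    refine total.congr_deriv ?_
    field_simp
    ring
  have hcont : IntervalIntegrable (fun v : ℝ => 7*(1+(1-v^3)^2)/(2-v^3)^2)
      MeasureTheory.volume 0 1 := by
    apply ContinuousOn.intervalIntegrable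
    apply ContinuousOn.div
    · fun_prop
    · fun_prop
    · intro v hv
      rw [Set.uIcc_of_le (by norm_num : (0:ℝ) ≤ 1)] at hv
      obtain ⟨h0, h1⟩ := hv
      have hv3 : v^3 ≤ 1 := pow_le_one₀ h0 h1
      have : (0:ℝ) < 2 - v^3 := by linarith
      positivity
  rw [intervalIntegral.integral_eq_sub_of_hasDerivAt key hcont]
  -- now pure constant algebra
  have hc1' : (0:ℝ) < c - 1 := by linarith
  have earg1 : (2*1+c)/(c*s) = (1+c^2)/s := by
    field_simp
    linear_combination (-1)*hc3
  have hat0 : arctan (1/s) = π/6 := by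
    have h := Real.arctan_tan (x := π/6) (by linarith [Real.pi_pos]) (by linarith [Real.pi_pos])
    rw [Real.tan_pi_div_six] at h
    rw [hsdef]
    simpa using h
  have earg0 : (2*0+c)/(c*s) = 1/s := by
    rw [mul_comm c s]
    field_simp
    ring
  have eP1 : P 1 = (c/6)*(-(Real.log (c-1)) + (1/2)*Real.log (1+c+c^2)
      + s*arctan ((1+c^2)/s)) := by
    simp only [hPdef, earg1]
    norm_num [add_comm]
  have eP0 : P 0 = (c/6)*(-(Real.log c) + (1/2)*Real.log (c^2) + s*(π/6)) := by
    simp only [hPdef, earg0, hat0]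
    norm_num
  have eΦ1 : Φ 1 = 28/3 - (28/3)*(P 1) := by
    simp only [hΦdef]; norm_num
  have eΦ0 : Φ 0 = -((28/3)*(P 0)) := by
    simp only [hΦdef]; norm_num
  have hl2 : Real.log 2 = 3 * Real.log c := by
    rw [← hc3, Real.log_pow]; push_cast; ring
  have hlc2 : Real.log (c^2) = 2*Real.log c := by
    rw [Real.log_pow]; push_cast; ring
  have hlog1cc : Real.log (1+c+c^2) = -Real.log (c-1) := by
    have hprod : (c-1)*(1+c+c^2) = 1 := by linear_combination hc3
    have h := Real.log_mul (ne_of_gt hc1') (by positivity : (1+c+c^2 : ℝ) ≠ 0)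
    rw [hprod, Real.log_one] at h
    linarith
  have hlog2c2 : Real.log (2 - c^2) = 2*Real.log c + Real.log (c-1) := by
    have h2c2 : 2 - c^2 = c^2*(c-1) := by linear_combination (-1)*hc3
    rw [h2c2, Real.log_mul (by positivity) (ne_of_gt hc1'), hlc2]
  have hlog22 : Real.log (2*(2+c+c^2)) = 4*Real.log c - Real.log (c-1) := by
    have h : (2:ℝ)*(2+c+c^2) = (2*c)/(c-1) := by
      rw [eq_div_iff (ne_of_gt hc1')]; linear_combination 2*hc3
    rw [h, Real.log_div (by positivity) (ne_of_gt hc1'),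
      Real.log_mul (two_ne_zero) (ne_of_gt hc0), hl2]
    ring
  rw [hc2eq, eΦ1, eΦ0, eP1, eP0, hlog2c2, hlog22, hlog1cc, hlc2]
  have hsne : s ≠ 0 := ne_of_gt hs0
  field_simp
  linear_combination (504*c*Real.pi - 3024*c*arctan ((1+c^2)/s)) * hs2

namespace Stmt10Aux
open MeasureTheory


noncomputable section

def f (n : ℕ) (v : ℝ) : ℝ := 7*(2*(n:ℝ)+1) * (v^6*(1-v^3)^(2*n))

lemma f_cont (n : ℕ) : Continuous (f n) := by unfold f; continuity

lemma hs_pt {v : ℝ} (hv : v ∈ Set.Ioc (0:ℝ) 1) :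
    HasSum (fun n : ℕ => f n v) (7*(1+(1-v^3)^2)/(2-v^3)^2) := by
  obtain ⟨hv0, hv1⟩ := hv
  have hr0 : 0 ≤ 1 - v^3 := by nlinarith [pow_le_one₀ (n := 3) hv0.le hv1]
  have hr1 : 1 - v^3 < 1 := by nlinarith [pow_pos hv0 3]
  set q : ℝ := (1-v^3)^2 with hqdef
  have hq0 : 0 ≤ q := sq_nonneg _
  have hq1 : q < 1 := by
    rw [hqdef]
    nlinarith
  have h1 : HasSum (fun n : ℕ => (n:ℝ) * q^n) (q/(1-q)^2) := by
    apply hasSum_coe_mul_geometric_of_norm_lt_one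
    rw [Real.norm_eq_abs, abs_of_nonneg hq0]; exact hq1
  have h2 : HasSum (fun n : ℕ => q^n) ((1-q)⁻¹) := hasSum_geometric_of_lt_one hq0 hq1
  have h3 := ((h1.mul_left 2).add h2).mul_left (7*v^6)
  convert h3 using 1
  · rfl
  · funext n
    simp only [f, hqdef, pow_mul]
    ring
  · have hfac : 1 - q = v^3*(2-v^3) := by rw [hqdef]; ring
    have hv3 : v^3 ≠ 0 := by positivity
    have h2v : (2:ℝ) - v^3 ≠ 0 := by nlinarith
    rw [hfac]
    field_simp
    ring

lemma f_nonneg (n : ℕ) {v : ℝ} (hv : v ∈ Set.Ioc (0:ℝ) 1) : 0 ≤ f n v := by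
  obtain ⟨hv0, hv1⟩ := hv
  have hr0 : 0 ≤ 1 - v^3 := by nlinarith [pow_le_one₀ (n := 3) hv0.le hv1]
  unfold f
  positivity

lemma swap_eq :
    ∑' n : ℕ, ∫ v in Set.Ioc (0:ℝ) 1, f n v
      = ∫ v in Set.Ioc (0:ℝ) 1, 7*(1+(1-v^3)^2)/(2-v^3)^2 := by
  have hmeas : ∀ n : ℕ, AEStronglyMeasurable (f n)
      (volume.restrict (Set.Ioc (0:ℝ) 1)) :=
    fun n => (f_cont n).aestronglyMeasurable
  have hbound : ∀ v ∈ Set.Ioc (0:ℝ) 1,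
      (∑' n : ℕ, (‖f n v‖₊ : ENNReal)) ≤ (14 : ENNReal) := by
    intro v hv
    have hsum := hs_pt hv
    have hnn : ∀ n : ℕ, 0 ≤ f n v := fun n => f_nonneg n hv
    have e1 : ∀ n : ℕ, (‖f n v‖₊ : ENNReal) = ENNReal.ofReal (f n v) :=
      fun n => Real.enorm_eq_ofReal (hnn n)
    calc (∑' n : ℕ, (‖f n v‖₊ : ENNReal))
        = ∑' n : ℕ, ENNReal.ofReal (f n v) := by exact tsum_congr e1
      _ = ENNReal.ofReal (∑' n : ℕ, f n v) :=
          (ENNReal.ofReal_tsum_of_nonneg hnn hsum.summable).symm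
      _ ≤ (14 : ENNReal) := by
          rw [hsum.tsum_eq]
          obtain ⟨hv0, hv1⟩ := hv
          have hr0 : 0 ≤ 1 - v^3 := by nlinarith [pow_le_one₀ (n := 3) hv0.le hv1]
          have h2v : (1:ℝ) ≤ 2 - v^3 := by nlinarith
          have hle : 7*(1+(1-v^3)^2)/(2-v^3)^2 ≤ (14:ℝ) := by
            rw [div_le_iff₀ (by nlinarith)]
            nlinarith
          calc ENNReal.ofReal (7*(1+(1-v^3)^2)/(2-v^3)^2)
              ≤ ENNReal.ofReal (14:ℝ) := ENNReal.ofReal_le_ofReal hle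
            _ ≤ (14 : ENNReal) := by norm_num
  have hfin : (∑' n : ℕ, ∫⁻ v in Set.Ioc (0:ℝ) 1, ‖f n v‖₊ ∂volume) ≠ ⊤ := by
    rw [← MeasureTheory.lintegral_tsum
      (fun n => ((f_cont n).measurable.nnnorm.coe_nnreal_ennreal).aemeasurable)]
    have hle : (∫⁻ v in Set.Ioc (0:ℝ) 1, ∑' n : ℕ, (‖f n v‖₊ : ENNReal) ∂volume)
        ≤ ∫⁻ _ in Set.Ioc (0:ℝ) 1, (14 : ENNReal) ∂volume := by
      apply MeasureTheory.setLIntegral_mono' measurableSet_Ioc hbound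
    have : (∫⁻ _ in Set.Ioc (0:ℝ) 1, (14 : ENNReal) ∂volume) = 14 := by
      rw [MeasureTheory.setLIntegral_const]
      simp [Real.volume_Ioc]
    exact ne_top_of_le_ne_top (by rw [this]; norm_num) hle
  rw [← MeasureTheory.integral_tsum hmeas hfin]
  apply MeasureTheory.integral_congr_ae
  rw [Filter.EventuallyEq, MeasureTheory.ae_restrict_iff' measurableSet_Ioc]
  filter_upwards with v hv
  exact (hs_pt hv).tsum_eq

end

end Stmt10Aux

theorem stmt_10 :
    ∑' n : ℕ, (poch (1) n * poch (1) n * poch (3/2) n) / (poch (5/3) n * poch (13/6) n * (Nat.factorial n : ℝ)) * (1 : ℝ) ^ n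
      = 28/3 + 7 * (2:ℝ) ^ ((1:ℝ)/3) * Real.pi / (9 * Real.sqrt 3)
        - 14 * (2:ℝ) ^ ((1:ℝ)/3)
            * Real.arctan ((1 + (2:ℝ) ^ ((2:ℝ)/3)) / Real.sqrt 3) / (3 * Real.sqrt 3)
        + 14/9 * (2:ℝ) ^ ((1:ℝ)/3) * Real.log (2 - (2:ℝ) ^ ((2:ℝ)/3))
        - 7/9 * (2:ℝ) ^ ((1:ℝ)/3)
            * Real.log (2 * (2 + (2:ℝ) ^ ((1:ℝ)/3) + (2:ℝ) ^ ((2:ℝ)/3))) := by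
  have hterm : ∀ n : ℕ,
      poch (1) n * poch (1) n * poch (3/2) n / (poch (5/3) n * poch (13/6) n * (Nat.factorial n : ℝ)) * (1 : ℝ) ^ n
        = ∫ v in Set.Ioc (0:ℝ) 1, Stmt10Aux.f n v := by
    intro n
    rw [one_pow, mul_one, term_eq n]
    have : ∫ v in Set.Ioc (0:ℝ) 1, Stmt10Aux.f n v
        = (7*(2*(n:ℝ)+1)) * ∫ v in Set.Ioc (0:ℝ) 1, v^6*(1-v^3)^(2*n) := by
      rw [← MeasureTheory.integral_const_mul]
      rfl
    rw [this, L, intervalIntegral.integral_of_le (by norm_num : (0:ℝ) ≤ 1)]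
  rw [tsum_congr hterm, Stmt10Aux.swap_eq,
    ← intervalIntegral.integral_of_le (by norm_num : (0:ℝ) ≤ 1)]
  exact eval_main
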